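/- arXiv:1502.04091 — 2 statements merged into one kernel-verified Lean document; each statement's English description precedes it below -/
import Mathlib

section
/- Let n ≥ 1 and let (W, γ) be a nonzero Hermitian Clifford module for ℝ^{n+1}. Then for every null vector ζ = (ζ₁, …, ζ_{n+1}, 1) ∈ ℝ^{n+2} with ζ₁² + ⋯ + ζ_{n+1}² = 1 and for each choice of sign ±, there exists a ∈ W with ‖a‖ = 1 such that ζ = ζ_a^±. -/
open Complex RealInnerProductSpace

private lemma rcOfReal (x : ℝ) : (RCLike.ofReal x : ℂ) = Complex.ofReal x := rfl

section Aux
variable {n : ℕ} {W : Type*} [NormedAddCommGroup W] [InnerProductSpace ℂ W]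
  (γ : EuclideanSpace ℝ (Fin (n + 1)) →ₗ[ℝ] (W →ₗ[ℂ] W))
  (hγsq : ∀ v : EuclideanSpace ℝ (Fin (n + 1)),
      γ v ∘ₗ γ v = ((-(‖v‖ ^ 2 : ℝ) : ℂ)) • (LinearMap.id : W →ₗ[ℂ] W))
  (hγskew : ∀ (v : EuclideanSpace ℝ (Fin (n + 1))) (ψ φ : W),
      (inner ℂ (γ v ψ) φ : ℂ) = -(inner ℂ ψ (γ v φ) : ℂ))

include hγsq

lemma gamma_sq_apply (v : EuclideanSpace ℝ (Fin (n+1))) (a : W) :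
    γ v (γ v a) = ((-(‖v‖ ^ 2 : ℝ) : ℂ)) • a := by
  have h := congrArg (fun T : W →ₗ[ℂ] W => T a) (hγsq v)
  simpa using h

include hγskew

lemma gamma_inner_self (v : EuclideanSpace ℝ (Fin (n+1))) (a : W) :
    (inner ℂ (γ v a) (γ v a) : ℂ) = (‖v‖ : ℂ) ^ 2 * (‖a‖ : ℂ) ^ 2 := by
  rw [hγskew v a (γ v a), gamma_sq_apply γ hγsq, inner_smul_right,
    inner_self_eq_norm_sq_to_K, rcOfReal]
  push_cast
  ring

lemma norm_gamma (v : EuclideanSpace ℝ (Fin (n+1))) (a : W) :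
    ‖γ v a‖ = ‖v‖ * ‖a‖ := by
  have h := gamma_inner_self γ hγsq hγskew v a
  rw [inner_self_eq_norm_sq_to_K, rcOfReal] at h
  have h2 : ((‖γ v a‖ ^ 2 : ℝ) : ℂ) = ((‖v‖^2 * ‖a‖^2 : ℝ) : ℂ) := by push_cast; linear_combination h
  have h3 : ‖γ v a‖ ^ 2 = (‖v‖ * ‖a‖) ^ 2 := by
    have := Complex.ofReal_injective h2; nlinarith [this]
  rw [← Real.sqrt_sq (norm_nonneg (γ v a)), h3,
    Real.sqrt_sq (mul_nonneg (norm_nonneg v) (norm_nonneg a))]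

omit hγskew

lemma gamma_anticomm {v w : EuclideanSpace ℝ (Fin (n+1))} (h0 : ⟪v, w⟫ = 0) (b : W) :
    γ v (γ w b) = - γ w (γ v b) := by
  have h := congrArg (fun T : W →ₗ[ℂ] W => T b) (hγsq (v + w))
  simp only [map_add, LinearMap.add_comp, LinearMap.comp_add, LinearMap.add_apply,
    LinearMap.comp_apply, LinearMap.smul_apply, LinearMap.id_apply] at h
  have hnorm : ‖v + w‖ ^ 2 = ‖v‖ ^ 2 + ‖w‖ ^ 2 := by
    rw [norm_add_sq_real, h0]; ring
  rw [hnorm, gamma_sq_apply γ hγsq v b, gamma_sq_apply γ hγsq w b] at h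
  have hsmul : ((-(‖v‖^2 + ‖w‖^2 : ℝ) : ℂ)) • b
      = ((-(‖v‖^2 : ℝ) : ℂ)) • b + ((-(‖w‖^2 : ℝ) : ℂ)) • b := by
    rw [← add_smul]; push_cast; ring_nf
  rw [hsmul] at h
  have := h
  abel_nf at this ⊢
  linear_combination (norm := module) this

end Aux


/-!
Minkowski space `ℝ^{n+1,1}` is modeled as `EuclideanSpace ℝ (Fin (n+1)) × ℝ`.
A Hermitian Clifford module for `ℝ^{n+1}` is a complex inner product space `W`
with an `ℝ`-linear map `γ : ℝ^{n+1} →ₗ[ℝ] End_ℂ(W)` such that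
`γ(v)² = −|v|²·Id` and each `γ(v)` is skew-Hermitian.
-/

/-- The vector `ζ_a^±` of Minkowski space associated to a spinor `a`:
its `j`-th spatial component is `∓i⟨γ(e_j)a, a⟩` (a real number) and its time
component is `‖a‖²`.  The sign `±` is encoded by `ε ∈ {1, -1}`. -/
noncomputable def zetaVec (n : ℕ) {W : Type*} [NormedAddCommGroup W] [InnerProductSpace ℂ W]
    (γ : EuclideanSpace ℝ (Fin (n + 1)) →ₗ[ℝ] (W →ₗ[ℂ] W)) (ε : ℝ) (a : W) :
    EuclideanSpace ℝ (Fin (n + 1)) × ℝ :=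
  ((WithLp.toLp 2 (fun j => (-(ε : ℂ) * Complex.I *
      (inner ℂ (γ (EuclideanSpace.single j (1 : ℝ)) a) a : ℂ)).re) :
      EuclideanSpace ℝ (Fin (n + 1))),
    ‖a‖ ^ 2)

/-- Every null vector `ζ = (ζ₁, …, ζ_{n+1}, 1)` with `ζ₁² + ⋯ + ζ_{n+1}² = 1`
is of the form `ζ_a^±` for some unit spinor `a`, for each choice of sign. -/
theorem exists_unit_spinor_zetaVec_eq (n : ℕ) (hn : 1 ≤ n)
    (W : Type*) [NormedAddCommGroup W] [InnerProductSpace ℂ W]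
    [FiniteDimensional ℂ W] [Nontrivial W]
    (γ : EuclideanSpace ℝ (Fin (n + 1)) →ₗ[ℝ] (W →ₗ[ℂ] W))
    (hγsq : ∀ v : EuclideanSpace ℝ (Fin (n + 1)),
      γ v ∘ₗ γ v = ((-(‖v‖ ^ 2 : ℝ) : ℂ)) • (LinearMap.id : W →ₗ[ℂ] W))
    (hγskew : ∀ (v : EuclideanSpace ℝ (Fin (n + 1))) (ψ φ : W),
      (inner ℂ (γ v ψ) φ : ℂ) = -(inner ℂ ψ (γ v φ) : ℂ))
    (z : EuclideanSpace ℝ (Fin (n + 1))) (hz : (∑ j, z j ^ 2) = 1)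
    (ε : ℝ) (hε : ε = 1 ∨ ε = -1) :
    ∃ a : W, ‖a‖ = 1 ∧ zetaVec n γ ε a = (z, 1) := by
  classical
  have hε2 : ε * ε = 1 := by rcases hε with h|h <;> norm_num [h]
  have hεabs : |ε| = 1 := by rcases hε with h|h <;> norm_num [h]
  have hε2C : ((ε:ℂ))^2 = 1 := by rcases hε with h|h <;> norm_num [h]
  have hzz : ⟪z, z⟫ = 1 := by
    have h1 : ⟪z, z⟫ = ∑ j, z j * z j := rfl
    rw [h1, ← hz]
    exact Finset.sum_congr rfl fun j _ => (sq (z j)).symm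
  have hznorm : ‖z‖ = 1 := by
    have h2 : ‖z‖^2 = 1 := by rw [← real_inner_self_eq_norm_sq]; exact hzz
    nlinarith [norm_nonneg z]
  obtain ⟨b, hb⟩ := exists_ne (0 : W)
  -- eigenvector of γ z with eigenvalue -ε i
  have key : ∃ a₀ : W, a₀ ≠ 0 ∧ γ z a₀ = (-(ε:ℂ) * Complex.I) • a₀ := by
    by_cases hcase : (ε:ℂ) • b + Complex.I • γ z b ≠ 0
    · refine ⟨_, hcase, ?_⟩
      rw [map_add, map_smul, map_smul, gamma_sq_apply γ hγsq z b, hznorm]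
      match_scalars
      · push_cast; linear_combination (ε:ℂ) * Complex.I_sq
      · push_cast; linear_combination Complex.I * hε2C
    · push_neg at hcase
      have hzb : γ z b = ((ε:ℂ) * Complex.I) • b := by
        have h := hcase
        have h2 : Complex.I • γ z b = -((ε:ℂ) • b) := by
          rw [eq_neg_iff_add_eq_zero, add_comm]; exact h
        calc γ z b = (-Complex.I) • (Complex.I • γ z b) := by
              rw [smul_smul]; norm_num
          _ = ((ε:ℂ) * Complex.I) • b := by
              rw [h2, smul_neg, smul_smul]; rw [← neg_smul]; ring_nf
      obtain ⟨w, hw0, hwz⟩ : ∃ w : EuclideanSpace ℝ (Fin (n+1)), w ≠ 0 ∧ ⟪z, w⟫ = 0 := by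
        have h01 : ((0 : Fin (n+1)) : ℕ) ≠ ((1 : Fin (n+1)) : ℕ) := by
          simp [Fin.val_one']
          omega
        have horth : ∀ i : Fin (n+1),
            ⟪z, EuclideanSpace.single i (1:ℝ) - z i • z⟫ = 0 := by
          intro i
          rw [inner_sub_right, real_inner_smul_right, EuclideanSpace.inner_single_right]
          simp [hzz, hznorm]
        by_cases h0 : EuclideanSpace.single (0 : Fin (n+1)) (1:ℝ) - z 0 • z = 0
        · refine ⟨_, ?_, horth 1⟩
          intro h1
          rw [sub_eq_zero] at h0 h1
          have e00 : (1:ℝ) = z 0 * z 0 := by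
            have := congrArg (fun v => v 0) h0
            simpa [EuclideanSpace.single_apply] using this
          have e01 : (0:ℝ) = z 0 * z 1 := by
            have := congrArg (fun v => v 1) h0
            simpa [EuclideanSpace.single_apply, (Fin.val_ne_iff.mp h01).symm] using this
          have e11 : (1:ℝ) = z 1 * z 1 := by
            have := congrArg (fun v => v 1) h1
            simpa [EuclideanSpace.single_apply] using this
          nlinarith
        · exact ⟨_, h0, horth 0⟩
      refine ⟨γ w b, ?_, ?_⟩
      · intro h
        have h2 := gamma_sq_apply γ hγsq w b
        rw [h, map_zero] at h2
        have h3 : ((-(‖w‖^2 : ℝ) : ℂ)) ≠ 0 := by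
          simpa using norm_ne_zero_iff.mpr hw0
        exact hb ((smul_eq_zero_iff_right h3).mp h2.symm)
      · rw [gamma_anticomm γ hγsq hwz b, hzb, map_smul, ← neg_smul]
        congr 1
        ring
  obtain ⟨a₀, ha₀, heig⟩ := key
  have hc0 : (0:ℝ) < ‖a₀‖ := norm_pos_iff.mpr ha₀
  set a : W := ‖a₀‖⁻¹ • a₀ with ha
  have hna : ‖a‖ = 1 := by
    rw [ha, norm_smul, norm_inv, norm_norm]
    field_simp
  have heiga : γ z a = (-(ε:ℂ) * Complex.I) • a := by
    rw [ha, LinearMap.map_smul_of_tower, heig, smul_comm]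
  have hinner : ∀ v : EuclideanSpace ℝ (Fin (n+1)),
      ‖(inner ℂ (γ v a) a : ℂ)‖ ≤ ‖v‖ := by
    intro v
    calc ‖(inner ℂ (γ v a) a : ℂ)‖ = ‖(inner ℂ (γ v a) a : ℂ)‖ := rfl
      _ ≤ ‖γ v a‖ * ‖a‖ := norm_inner_le_norm _ _
      _ = ‖v‖ := by rw [norm_gamma γ hγsq hγskew, hna, mul_one, mul_one]
  set w' : EuclideanSpace ℝ (Fin (n+1)) :=
    (WithLp.toLp 2 (fun j => (-(ε : ℂ) * Complex.I *
      (inner ℂ (γ (EuclideanSpace.single j (1 : ℝ)) a) a : ℂ)).re) :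
      EuclideanSpace ℝ (Fin (n+1))) with hw'
  have hkey : ∀ v : EuclideanSpace ℝ (Fin (n+1)),
      ⟪v, w'⟫ = (-(ε:ℂ) * Complex.I * (inner ℂ (γ v a) a : ℂ)).re := by
    intro v
    have hv : ∑ j, v j • EuclideanSpace.single j (1:ℝ) = v := by
      have := (EuclideanSpace.basisFun (Fin (n+1)) ℝ).sum_repr v
      simpa [EuclideanSpace.basisFun_apply, EuclideanSpace.basisFun_repr] using this
    have h1 : ⟪v, w'⟫ = ∑ j, v j * w' j := by
      rw [PiLp.inner_apply]; exact Finset.sum_congr rfl fun j _ => by simp [mul_comm]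
    conv_rhs => rw [← hv]
    rw [map_sum, LinearMap.sum_apply, sum_inner, Finset.mul_sum]
    rw [h1, Complex.re_sum]
    refine Finset.sum_congr rfl fun j _ => ?_
    rw [γ.map_smul, LinearMap.smul_apply]
    have h2 : (inner ℂ ((v j) • γ (EuclideanSpace.single j (1:ℝ)) a) a : ℂ)
        = ((v j : ℂ)) * inner ℂ (γ (EuclideanSpace.single j (1:ℝ)) a) a := by
      rw [← Complex.coe_smul, inner_smul_left, Complex.conj_ofReal]
    rw [h2, hw']
    rw [mul_left_comm, Complex.re_ofReal_mul]
  have hzw : ⟪z, w'⟫ = 1 := by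
    rw [hkey z, heiga, inner_smul_left, inner_self_eq_norm_sq_to_K, hna]
    simp only [map_mul, map_neg, Complex.conj_ofReal, Complex.conj_I, rcOfReal]
    have : (-(ε:ℂ) * Complex.I * (-(ε:ℂ) * -Complex.I * ((1:ℝ):ℂ) ^ 2))
        = ((ε * ε : ℝ) : ℂ) := by push_cast; linear_combination (-(ε:ℂ)^2) * Complex.I_sq
    rw [this, hε2]
    simp
  have hbound : ⟪w', w'⟫ ≤ ‖w'‖ := by
    rw [hkey w']
    calc (-(ε:ℂ) * Complex.I * (inner ℂ (γ w' a) a : ℂ)).re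
        ≤ |(-(ε:ℂ) * Complex.I * (inner ℂ (γ w' a) a : ℂ)).re| := le_abs_self _
      _ ≤ ‖(-(ε:ℂ) * Complex.I * (inner ℂ (γ w' a) a : ℂ))‖ :=
          Complex.abs_re_le_norm _
      _ = ‖(inner ℂ (γ w' a) a : ℂ)‖ := by
          rw [norm_mul, norm_mul]
          simp [hεabs]
      _ ≤ ‖w'‖ := hinner w'
  have hwz' : w' = z := by
    have h1 : ‖w' - z‖^2 ≤ 0 := by
      rw [norm_sub_sq_real, hznorm]
      have h2 : ⟪w', z⟫ = 1 := by rw [real_inner_comm]; exact hzw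
      rw [h2]
      nlinarith [hbound, real_inner_self_eq_norm_sq w', norm_nonneg w']
    have h2 : ‖w' - z‖ = 0 := by nlinarith [norm_nonneg (w' - z), sq_nonneg ‖w' - z‖]
    exact sub_eq_zero.mp (norm_eq_zero.mp h2)
  refine ⟨a, hna, ?_⟩
  have hzeta : zetaVec n γ ε a = (w', ‖a‖^2) := rfl
  rw [hzeta, hwz', hna]
  norm_num
end

section
/- Let σ be the surface measure on the unit sphere S² ⊂ ℝ³, let T : S² → ℝ be continuous, and let ε > 0. Suppose H, H₀, ρ, w₀ : (0, ε) × S² → ℝ and w : (0, ε) × S² → ℝ³ satisfy, uniformly in x ∈ S² as r → 0⁺: H(r,x) = cosh r − ¼ T(x) r³ + o(r³), H₀(r,x) = cosh r + o(r³), H(r,x) > 0, ρ(r,x) = r⁻² + o(r⁻¹), w₀(r,x) = r⁻¹ + o(1), and w(r,x) = x/r + o(r⁻¹) componentwise. Then lim_{r → 0⁺} ∫_{S²} [(H₀(r,x)² − H(r,x)²)/H(r,x)]·(w₀(r,x), w(r,x))·ρ(r,x) dσ(x) = ½ (∫_{S²} T dσ, ∫_{S²} T(x)·x dσ(x)) in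 ℝ × ℝ³. -/
open Filter Topology MeasureTheory Metric

/-- The surface measure `σ` on the unit sphere `S² ⊂ ℝ³`. -/
noncomputable def sphereMeasure : Measure (sphere (0 : EuclideanSpace ℝ (Fin 3)) 1) :=
  (volume : Measure (EuclideanSpace ℝ (Fin 3))).toSphere

instance : IsFiniteMeasure sphereMeasure := by
  unfold sphereMeasure; infer_instance

/-- Telescoping estimate for a difference of products of five real numbers. -/
lemma tele5 (a1 a2 a3 a4 a5 b1 b2 b3 b4 b5 : ℝ) :
    |a1 * a2 * a3 * a4 * a5 - b1 * b2 * b3 * b4 * b5| ≤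
      |a1 - b1| * |a2| * |a3| * |a4| * |a5| + |b1| * |a2 - b2| * |a3| * |a4| * |a5| +
      |b1| * |b2| * |a3 - b3| * |a4| * |a5| + |b1| * |b2| * |b3| * |a4 - b4| * |a5| +
      |b1| * |b2| * |b3| * |b4| * |a5 - b5| := by
  have key : a1 * a2 * a3 * a4 * a5 - b1 * b2 * b3 * b4 * b5 =
      ((a1 - b1) * a2 * a3 * a4 * a5 + b1 * (a2 - b2) * a3 * a4 * a5 +
       b1 * b2 * (a3 - b3) * a4 * a5 + b1 * b2 * b3 * (a4 - b4) * a5) +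
       b1 * b2 * b3 * b4 * (a5 - b5) := by ring
  rw [key]
  refine le_trans (abs_add_le _ _) ?_
  refine le_trans (add_le_add_left (abs_add_le _ _) _) ?_
  refine le_trans (add_le_add_left (add_le_add_left (abs_add_le _ _) _) _) ?_
  refine le_trans (add_le_add_left (add_le_add_left (add_le_add_left (abs_add_le _ _) _) _) _) ?_
  simp only [abs_mul]
  linarith

set_option maxHeartbeats 1000000 in
/-- The key pointwise estimate. -/
lemma core_est (M δ r c t u A B wv ρv : ℝ)
    (hM : 0 ≤ M) (hδ0 : 0 < δ) (hδ1 : δ ≤ 1)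
    (hr0 : 0 < r) (hr1 : r ≤ 1) (hrM : (M + 4) * r ^ 3 ≤ 1)
    (hc1 : 1 ≤ c) (hc2 : c ≤ 2)
    (ht : |t| ≤ M) (hu : |u| ≤ 1)
    (hA : |A - c| ≤ δ * r ^ 3)
    (hB : |B - (c - t / 4 * r ^ 3)| ≤ δ * r ^ 3)
    (hρv : |ρv - r⁻¹ ^ 2| ≤ δ * r⁻¹)
    (hwv : |wv - u * r⁻¹| ≤ δ * r⁻¹) :
    |(A ^ 2 - B ^ 2) / B * wv * ρv - t / 2 * u| ≤ 200 * (M + 1) ^ 2 * (δ + r) := by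
  have hr3 : 0 < r ^ 3 := by positivity
  have hr3r : r ^ 3 ≤ r := by
    have hk : r - r ^ 3 = r * (1 - r) * (1 + r) := by ring
    have hnn : 0 ≤ r * (1 - r) * (1 + r) :=
      mul_nonneg (mul_nonneg hr0.le (by linarith)) (by linarith)
    linarith
  have hr3le : r ^ 3 ≤ 1 := hr3r.trans hr1
  have hrinv0 : 0 < r⁻¹ := by positivity
  have hrinv1 : 1 ≤ r⁻¹ := by
    have := inv_anti₀ hr0 hr1
    simpa using this
  obtain ⟨hA1, hA2⟩ := abs_le.mp hA
  obtain ⟨hB1, hB2⟩ := abs_le.mp hB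
  obtain ⟨ht1, ht2⟩ := abs_le.mp ht
  have htr : t * r ^ 3 ≤ M * r ^ 3 := mul_le_mul_of_nonneg_right ht2 hr3.le
  have htr' : -(M * r ^ 3) ≤ t * r ^ 3 := by nlinarith [mul_le_mul_of_nonneg_right ht1 hr3.le]
  have hδr0 : 0 ≤ δ * r ^ 3 := by positivity
  have hδr : δ * r ^ 3 ≤ r ^ 3 := by
    have := mul_le_mul_of_nonneg_right hδ1 hr3.le
    linarith
  have hMr0 : 0 ≤ M * r ^ 3 := by positivity
  have hMr4 : M * r ^ 3 + 4 * r ^ 3 ≤ 1 := by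
    have : (M + 4) * r ^ 3 = M * r ^ 3 + 4 * r ^ 3 := by ring
    linarith
  have hBl : 3 / 4 ≤ B := by linarith
  have hBu : B ≤ 4 := by linarith
  have hB0 : (0:ℝ) < B := by linarith
  have hc0 : (0:ℝ) < c := by linarith
  have hAa1 : -3 ≤ A := by linarith
  have hAa2 : A ≤ 3 := by linarith
  -- bounds for the five factors and their differences
  have f1 : |A - B - t / 4 * r ^ 3| ≤ 2 * (δ * r ^ 3) := by
    have e : A - B - t / 4 * r ^ 3 = (A - c) - (B - (c - t / 4 * r ^ 3)) := by ring
    rw [e]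
    refine (abs_sub _ _).trans ?_
    have := abs_le.mpr ⟨hA1, hA2⟩
    have := abs_le.mpr ⟨hB1, hB2⟩
    linarith
  have b1a : |t / 4 * r ^ 3| ≤ M / 4 * r ^ 3 := by
    rw [abs_mul, abs_of_pos hr3, abs_div]
    have h4 : |(4:ℝ)| = 4 := by norm_num
    rw [h4]
    gcongr
  have f2 : |A + B - 2 * c| ≤ (2 * δ + M / 4) * r ^ 3 := by
    rw [abs_le]; constructor <;> linarith
  have f2a : |A + B| ≤ 8 := by
    rw [abs_le]; constructor <;> linarith
  have b2a : |2 * c| ≤ 4 := by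
    rw [abs_le]; constructor <;> linarith
  have f3a : |B⁻¹| ≤ 2 := by
    rw [abs_of_pos (inv_pos.mpr hB0)]
    have h34 : ((3:ℝ) / 4)⁻¹ ≤ 2 := by norm_num
    exact le_trans (inv_anti₀ (by norm_num) hBl) h34
  have b3a : |c⁻¹| ≤ 1 := by
    rw [abs_of_pos (inv_pos.mpr hc0)]
    have := inv_anti₀ one_pos hc1
    simpa using this
  have f3 : |B⁻¹ - c⁻¹| ≤ (M + 2) * r ^ 3 := by
    have e : B⁻¹ - c⁻¹ = (c - B) * B⁻¹ * c⁻¹ := by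
      field_simp
    rw [e, abs_mul, abs_mul]
    have hcB : |c - B| ≤ (M / 4 + 1) * r ^ 3 := by
      rw [abs_le]; constructor <;> linarith
    calc |c - B| * |B⁻¹| * |c⁻¹| ≤ ((M / 4 + 1) * r ^ 3) * 2 * 1 := by gcongr
      _ ≤ (M + 2) * r ^ 3 := by linarith
  have b4a : |u * r⁻¹| ≤ r⁻¹ := by
    rw [abs_mul, abs_of_pos hrinv0]
    have := mul_le_mul_of_nonneg_right hu hrinv0.le
    linarith
  have f4 : |wv| ≤ 2 * r⁻¹ := by
    have e : wv = (wv - u * r⁻¹) + u * r⁻¹ := by ring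
    have hδrinv : δ * r⁻¹ ≤ r⁻¹ := by
      have := mul_le_mul_of_nonneg_right hδ1 hrinv0.le
      linarith
    calc |wv| = |(wv - u * r⁻¹) + u * r⁻¹| := by rw [← e]
      _ ≤ |wv - u * r⁻¹| + |u * r⁻¹| := abs_add_le _ _
      _ ≤ δ * r⁻¹ + r⁻¹ := by linarith
      _ ≤ 2 * r⁻¹ := by linarith
  have b5a : |r⁻¹ ^ 2| = r⁻¹ ^ 2 := abs_of_pos (by positivity)
  have f5 : |ρv| ≤ 2 * r⁻¹ ^ 2 := by
    have e : ρv = (ρv - r⁻¹ ^ 2) + r⁻¹ ^ 2 := by ring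
    have hδrinv : δ * r⁻¹ ≤ r⁻¹ := by
      have := mul_le_mul_of_nonneg_right hδ1 hrinv0.le
      linarith
    have hinv2 : r⁻¹ ≤ r⁻¹ ^ 2 := by
      have hk := mul_le_mul_of_nonneg_right hrinv1 hrinv0.le
      rw [pow_two]
      linarith
    calc |ρv| = |(ρv - r⁻¹ ^ 2) + r⁻¹ ^ 2| := by rw [← e]
      _ ≤ |ρv - r⁻¹ ^ 2| + |r⁻¹ ^ 2| := abs_add_le _ _
      _ ≤ δ * r⁻¹ + r⁻¹ ^ 2 := by rw [b5a]; linarith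
      _ ≤ 2 * r⁻¹ ^ 2 := by linarith
  -- cancellation identities
  have hrne : r ≠ 0 := ne_of_gt hr0
  have c1 : r ^ 3 * r⁻¹ * r⁻¹ ^ 2 = 1 := by
    field_simp
  have c3 : r ^ 3 * r⁻¹ * r⁻¹ = r := by
    field_simp
  -- rewrite both sides as five-fold products
  have e1 : (A ^ 2 - B ^ 2) / B * wv * ρv = (A - B) * (A + B) * B⁻¹ * wv * ρv := by
    rw [div_eq_mul_inv]
    ring
  have e2 : t / 2 * u = (t / 4 * r ^ 3) * (2 * c) * c⁻¹ * (u * r⁻¹) * (r⁻¹ ^ 2) := by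
    field_simp
    ring
  rw [e1, e2]
  have key := tele5 (A - B) (A + B) B⁻¹ wv ρv (t / 4 * r ^ 3) (2 * c) c⁻¹ (u * r⁻¹) (r⁻¹ ^ 2)
  -- bound the five terms
  have T1 : |A - B - t / 4 * r ^ 3| * |A + B| * |B⁻¹| * |wv| * |ρv| ≤ 128 * δ := by
    calc |A - B - t / 4 * r ^ 3| * |A + B| * |B⁻¹| * |wv| * |ρv|
        ≤ (2 * (δ * r ^ 3)) * 8 * 2 * (2 * r⁻¹) * (2 * r⁻¹ ^ 2) := by gcongr
      _ = 128 * δ * (r ^ 3 * r⁻¹ * r⁻¹ ^ 2) := by ring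
      _ = 128 * δ := by rw [c1, mul_one]
  have T2 : |t / 4 * r ^ 3| * |A + B - 2 * c| * |B⁻¹| * |wv| * |ρv| ≤ (4 * M + M ^ 2) * r := by
    calc |t / 4 * r ^ 3| * |A + B - 2 * c| * |B⁻¹| * |wv| * |ρv|
        ≤ (M / 4 * r ^ 3) * ((2 * δ + M / 4) * r ^ 3) * 2 * (2 * r⁻¹) * (2 * r⁻¹ ^ 2) := by
          gcongr
      _ = (2 * M * (2 * δ + M / 4)) * r ^ 3 * (r ^ 3 * r⁻¹ * r⁻¹ ^ 2) := by ring
      _ = (2 * M * (2 * δ + M / 4)) * r ^ 3 := by rw [c1, mul_one]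
      _ ≤ (4 * M + M ^ 2) * r ^ 3 := by
          linarith [mul_nonneg (mul_nonneg hM hr3.le) (sub_nonneg.mpr hδ1),
            mul_nonneg (mul_nonneg hM hM) hr3.le]
      _ ≤ (4 * M + M ^ 2) * r := by
          have h0 : (0:ℝ) ≤ 4 * M + M ^ 2 := by positivity
          exact mul_le_mul_of_nonneg_left hr3r h0
  have T3 : |t / 4 * r ^ 3| * |2 * c| * |B⁻¹ - c⁻¹| * |wv| * |ρv| ≤ (4 * M ^ 2 + 8 * M) * r := by
    calc |t / 4 * r ^ 3| * |2 * c| * |B⁻¹ - c⁻¹| * |wv| * |ρv|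
        ≤ (M / 4 * r ^ 3) * 4 * ((M + 2) * r ^ 3) * (2 * r⁻¹) * (2 * r⁻¹ ^ 2) := by gcongr
      _ = (4 * M * (M + 2)) * r ^ 3 * (r ^ 3 * r⁻¹ * r⁻¹ ^ 2) := by ring
      _ = (4 * M * (M + 2)) * r ^ 3 := by rw [c1, mul_one]
      _ = (4 * M ^ 2 + 8 * M) * r ^ 3 := by ring
      _ ≤ (4 * M ^ 2 + 8 * M) * r :=
          mul_le_mul_of_nonneg_left hr3r (by positivity)
  have T4 : |t / 4 * r ^ 3| * |2 * c| * |c⁻¹| * |wv - u * r⁻¹| * |ρv| ≤ 2 * M * δ := by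
    calc |t / 4 * r ^ 3| * |2 * c| * |c⁻¹| * |wv - u * r⁻¹| * |ρv|
        ≤ (M / 4 * r ^ 3) * 4 * 1 * (δ * r⁻¹) * (2 * r⁻¹ ^ 2) := by gcongr
      _ = 2 * M * δ * (r ^ 3 * r⁻¹ * r⁻¹ ^ 2) := by ring
      _ = 2 * M * δ := by rw [c1, mul_one]
  have T5 : |t / 4 * r ^ 3| * |2 * c| * |c⁻¹| * |u * r⁻¹| * |ρv - r⁻¹ ^ 2| ≤ M * δ := by
    calc |t / 4 * r ^ 3| * |2 * c| * |c⁻¹| * |u * r⁻¹| * |ρv - r⁻¹ ^ 2|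
        ≤ (M / 4 * r ^ 3) * 4 * 1 * r⁻¹ * (δ * r⁻¹) := by gcongr
      _ = M * δ * (r ^ 3 * r⁻¹ * r⁻¹) := by ring
      _ = M * δ * r := by rw [c3]
      _ ≤ M * δ := by
          have hk := mul_le_mul_of_nonneg_left hr1 (mul_nonneg hM hδ0.le)
          linarith
  refine key.trans ?_
  have hfin : 128 * δ + (4 * M + M ^ 2) * r + (4 * M ^ 2 + 8 * M) * r + 2 * M * δ + M * δ ≤
      200 * (M + 1) ^ 2 * (δ + r) := by
    linarith [hδ0.le, hr0.le, mul_nonneg hδ0.le hM, mul_nonneg hr0.le hM,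
      mul_nonneg hr0.le (mul_nonneg hM hM), mul_nonneg hδ0.le (mul_nonneg hM hM)]
  linarith [T1, T2, T3, T4, T5]

/-- Uniform convergence on a finite measure space implies convergence of integrals. -/
lemma integral_tendsto_of_uniform {X : Type*} [MeasurableSpace X] {E : Type*}
    [NormedAddCommGroup E] [NormedSpace ℝ E] (μ : Measure X) [IsFiniteMeasure μ]
    (g : ℝ → X → E) (φ : X → E)
    (hg : ∀ᶠ r in 𝓝[>] (0:ℝ), Integrable (g r) μ) (hφ : Integrable φ μ)
    (h : ∀ δ > (0:ℝ), ∀ᶠ r in 𝓝[>] (0:ℝ), ∀ x, ‖g r x - φ x‖ ≤ δ) :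
    Tendsto (fun r => ∫ x, g r x ∂μ) (𝓝[>] (0:ℝ)) (𝓝 (∫ x, φ x ∂μ)) := by
  rw [Metric.tendsto_nhds]
  intro η hη
  set C := (μ Set.univ).toReal with hC
  have hC0 : 0 ≤ C := ENNReal.toReal_nonneg
  have hδpos : 0 < η / (2 * (C + 1)) := by positivity
  filter_upwards [hg, h _ hδpos] with r hgr hr
  rw [dist_eq_norm]
  have hle : ‖(∫ x, g r x ∂μ) - ∫ x, φ x ∂μ‖ ≤ η / (2 * (C + 1)) * C := by
    rw [← integral_sub hgr hφ]
    exact norm_integral_le_of_norm_le_const (Filter.Eventually.of_forall hr)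
  have hlt : η / (2 * (C + 1)) * C < η := by
    rw [div_mul_eq_mul_div, div_lt_iff₀ (by positivity)]
    nlinarith
  linarith

/-- A coordinate of a vector in `ℝ³` is bounded by its norm. -/
lemma coord_le_norm (v : EuclideanSpace ℝ (Fin 3)) (i : Fin 3) : |v i| ≤ ‖v‖ := by
  rw [EuclideanSpace.norm_eq]
  have h1 : |v i| = Real.sqrt (‖v i‖ ^ 2) := by
    rw [Real.norm_eq_abs, Real.sqrt_sq_eq_abs, abs_abs]
  rw [h1]
  apply Real.sqrt_le_sqrt
  exact Finset.single_le_sum (f := fun j => ‖v j‖ ^ 2)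
    (fun j _ => by positivity) (Finset.mem_univ i)

/-- Coordinatewise bounds give a norm bound in `ℝ³`. -/
lemma norm_le_of_coords (v : EuclideanSpace ℝ (Fin 3)) (c : ℝ) (hc : 0 ≤ c)
    (h : ∀ i, |v i| ≤ c) : ‖v‖ ≤ 2 * c := by
  rw [EuclideanSpace.norm_eq]
  have hsum : ∑ i, ‖v i‖ ^ 2 ≤ (2*c)^2 := by
    rw [Fin.sum_univ_three]
    have h0 := h 0; have h1 := h 1; have h2 := h 2
    simp only [Real.norm_eq_abs]
    nlinarith [abs_nonneg (v 0), abs_nonneg (v 1), abs_nonneg (v 2)]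
  calc Real.sqrt (∑ i, ‖v i‖ ^ 2) ≤ Real.sqrt ((2*c)^2) := Real.sqrt_le_sqrt hsum
    _ = 2*c := by rw [Real.sqrt_sq (by positivity)]

/-- Analytic core of Theorem 4.5: given the uniform expansions (as `r → 0⁺`,
uniformly in `x ∈ S²`) `H = cosh r − ¼T(x)r³ + o(r³)`, `H₀ = cosh r + o(r³)`,
`H > 0`, `ρ = r⁻² + o(r⁻¹)`, `w₀ = r⁻¹ + o(1)` and `w = x/r + o(r⁻¹)`
componentwise, the quasi-local energy-momentum vector
`E(S_r) = ∫ ((H₀² − H²)/H)·(w₀, w)·ρ dσ` converges to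
`½(∫ T dσ, ∫ T·x dσ)` in `ℝ × ℝ³`. -/
theorem quasilocal_mass_limit (T : sphere (0 : EuclideanSpace ℝ (Fin 3)) 1 → ℝ)
    (hT : Continuous T) (ε : ℝ) (hε : 0 < ε)
    (H H₀ ρ w₀ : ℝ → sphere (0 : EuclideanSpace ℝ (Fin 3)) 1 → ℝ)
    (w : ℝ → sphere (0 : EuclideanSpace ℝ (Fin 3)) 1 → EuclideanSpace ℝ (Fin 3))
    -- continuity in `x` of all the data, for `r ∈ (0, ε)`
    (hcont : ∀ r ∈ Set.Ioo (0 : ℝ) ε, Continuous (H r) ∧ Continuous (H₀ r) ∧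
      Continuous (ρ r) ∧ Continuous (w₀ r) ∧ Continuous (w r))
    -- `H(r,x) = cosh r − ¼T(x)r³ + o(r³)` uniformly in `x`
    (hH : ∀ δ > (0 : ℝ), ∀ᶠ r in 𝓝[>] (0 : ℝ),
      ∀ x, |H r x - (Real.cosh r - T x / 4 * r ^ 3)| ≤ δ * r ^ 3)
    -- `H₀(r,x) = cosh r + o(r³)` uniformly in `x`
    (hH₀ : ∀ δ > (0 : ℝ), ∀ᶠ r in 𝓝[>] (0 : ℝ),
      ∀ x, |H₀ r x - Real.cosh r| ≤ δ * r ^ 3)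
    -- positivity of the mean curvature
    (hHpos : ∀ r ∈ Set.Ioo (0 : ℝ) ε, ∀ x, 0 < H r x)
    -- `ρ(r,x) = r⁻² + o(r⁻¹)` uniformly in `x`
    (hρ : ∀ δ > (0 : ℝ), ∀ᶠ r in 𝓝[>] (0 : ℝ),
      ∀ x, |ρ r x - r⁻¹ ^ 2| ≤ δ * r⁻¹)
    -- `w₀(r,x) = r⁻¹ + o(1)` uniformly in `x`
    (hw₀ : ∀ δ > (0 : ℝ), ∀ᶠ r in 𝓝[>] (0 : ℝ),
      ∀ x, |w₀ r x - r⁻¹| ≤ δ)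
    -- `w(r,x) = x/r + o(r⁻¹)` componentwise, uniformly in `x`
    (hw : ∀ δ > (0 : ℝ), ∀ᶠ r in 𝓝[>] (0 : ℝ),
      ∀ x, ∀ i : Fin 3, |w r x i - r⁻¹ * (x : EuclideanSpace ℝ (Fin 3)) i| ≤ δ * r⁻¹) :
    Tendsto (fun r =>
        ((∫ x, (H₀ r x ^ 2 - H r x ^ 2) / H r x * w₀ r x * ρ r x ∂sphereMeasure),
          ∫ x, ((H₀ r x ^ 2 - H r x ^ 2) / H r x * ρ r x) • w r x ∂sphereMeasure))
      (𝓝[>] (0 : ℝ))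
      (𝓝 ((1 / 2 * ∫ x, T x ∂sphereMeasure,
        (1 / 2 : ℝ) • ∫ x, T x • ((x : EuclideanSpace ℝ (Fin 3))) ∂sphereMeasure))) := by
  -- a bound for T
  obtain ⟨M₀, hM₀⟩ := (isCompact_range hT.norm).bddAbove
  set M := max M₀ 0 with hMdef
  have hM : 0 ≤ M := le_max_right _ _
  have hTM : ∀ x, |T x| ≤ M := fun x => by
    have h1 : ‖T x‖ ≤ M₀ := hM₀ ⟨x, rfl⟩
    rw [Real.norm_eq_abs] at h1
    exact h1.trans (le_max_left _ _)
  -- bounds for cosh r when 0 < r ≤ 1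
  have hcosh2 : ∀ r : ℝ, 0 < r → r ≤ 1 → Real.cosh r ≤ 2 := by
    intro r h0 h1
    have hexp : Real.exp (1/2) * Real.exp (1/2) = Real.exp 1 := by
      rw [← Real.exp_add]; norm_num
    have hE : Real.exp 1 < 2.7182818286 := Real.exp_one_lt_d9
    have he0 : 0 < Real.exp (1/2) := Real.exp_pos _
    have hhalf : Real.exp (1/2) ≤ 2 := by nlinarith [mul_self_nonneg (Real.exp (1/2) - 2)]
    calc Real.cosh r ≤ Real.exp (r^2/2) := Real.cosh_le_exp_half_sq r
      _ ≤ Real.exp (1/2) := Real.exp_le_exp.mpr (by nlinarith)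
      _ ≤ 2 := hhalf
  -- eventually facts
  have hIoo : ∀ᶠ r in 𝓝[>] (0:ℝ), r ∈ Set.Ioo (0:ℝ) ε :=
    Filter.eventually_of_mem (Ioo_mem_nhdsGT_of_mem ⟨le_refl 0, hε⟩) (fun r hr => hr)
  have hIoo1 : ∀ᶠ r in 𝓝[>] (0:ℝ), r ∈ Set.Ioo (0:ℝ) 1 :=
    Filter.eventually_of_mem (Ioo_mem_nhdsGT_of_mem ⟨le_refl 0, one_pos⟩) (fun r hr => hr)
  have hIooM : ∀ᶠ r in 𝓝[>] (0:ℝ), (M + 4) * r ^ 3 ≤ 1 := by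
    have hpos : (0:ℝ) < (M+4)⁻¹ := by positivity
    filter_upwards [Filter.eventually_of_mem
      (Ioo_mem_nhdsGT_of_mem (Set.mem_Ico.mpr ⟨le_refl (0:ℝ), hpos⟩)) (fun r hr => hr),
      hIoo1] with r hr hr1
    obtain ⟨hr0, hrI⟩ := hr
    obtain ⟨-, hrle1⟩ := hr1
    have h3 : r ^ 3 ≤ r := by
      have hk : r - r ^ 3 = r * (1 - r) * (1 + r) := by ring
      have hnn : 0 ≤ r * (1 - r) * (1 + r) :=
        mul_nonneg (mul_nonneg hr0.le (by linarith)) (by linarith)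
      linarith
    have h4 : (M + 4) * r < 1 := by
      have h5 : (M + 4) * r < (M + 4) * (M + 4)⁻¹ :=
        mul_lt_mul_of_pos_left hrI (by positivity)
      rwa [mul_inv_cancel₀ (by positivity : (M:ℝ) + 4 ≠ 0)] at h5
    calc (M + 4) * r ^ 3 ≤ (M + 4) * r :=
          mul_le_mul_of_nonneg_left h3 (by positivity)
      _ ≤ 1 := h4.le
  -- integrability eventually (both integrands)
  have hint : ∀ᶠ r in 𝓝[>] (0:ℝ),
      Integrable (fun x => (H₀ r x ^ 2 - H r x ^ 2) / H r x * w₀ r x * ρ r x) sphereMeasure ∧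
      Integrable (fun x => ((H₀ r x ^ 2 - H r x ^ 2) / H r x * ρ r x) • w r x) sphereMeasure := by
    filter_upwards [hIoo] with r hr
    obtain ⟨hHc, hH₀c, hρc, hw₀c, hwc⟩ := hcont r hr
    have hdiv : Continuous (fun x => (H₀ r x ^ 2 - H r x ^ 2) / H r x) :=
      ((hH₀c.pow 2).sub (hHc.pow 2)).div hHc (fun x => (hHpos r hr x).ne')
    constructor
    · exact ((hdiv.mul hw₀c).mul hρc).integrable_of_hasCompactSupport
        (HasCompactSupport.of_compactSpace _)
    · exact ((hdiv.mul hρc).smul hwc).integrable_of_hasCompactSupport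
        (HasCompactSupport.of_compactSpace _)
  -- the shared uniform estimate for both integrands
  have hunif : ∀ η > (0:ℝ), ∀ᶠ r in 𝓝[>] (0:ℝ), ∀ x,
      |(H₀ r x ^ 2 - H r x ^ 2) / H r x * w₀ r x * ρ r x - 1/2 * T x| ≤ η/2 ∧
      ∀ i : Fin 3, |(H₀ r x ^ 2 - H r x ^ 2) / H r x * (w r x i) * ρ r x -
        1/2 * T x * (x : EuclideanSpace ℝ (Fin 3)) i| ≤ η/2 := by
    intro η hη
    set δ := min 1 (η / (800 * (M+1)^2)) with hδdef
    have hδ0 : 0 < δ := lt_min one_pos (by positivity)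
    have hδ1 : δ ≤ 1 := min_le_left _ _
    have hδle : δ ≤ η / (800 * (M+1)^2) := min_le_right _ _
    have hrsmall : ∀ᶠ r in 𝓝[>] (0:ℝ), r < η / (800 * (M+1)^2) :=
      Filter.eventually_of_mem
        (Ioo_mem_nhdsGT_of_mem (Set.mem_Ico.mpr ⟨le_refl (0:ℝ), by positivity⟩))
        (fun r hr => hr.2)
    filter_upwards [hH δ hδ0, hH₀ δ hδ0, hρ δ hδ0, hw₀ δ hδ0, hw δ hδ0,
      hIoo1, hIooM, hrsmall]
      with r hHr hH₀r hρr hw₀r hwr hr1 hrM hrsm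
    obtain ⟨hr0, hrle1⟩ := hr1
    intro x
    have hrle1' : r ≤ 1 := hrle1.le
    have hc1 : 1 ≤ Real.cosh r := Real.one_le_cosh r
    have hc2 : Real.cosh r ≤ 2 := hcosh2 r hr0 hrle1'
    have hrinv1 : 1 ≤ r⁻¹ := by
      have := inv_anti₀ hr0 hrle1'
      simpa using this
    have hbound : 200 * (M+1)^2 * (δ + r) ≤ η / 2 := by
      have h5 : 200 * (M+1)^2 * (δ + r) ≤
          200 * (M+1)^2 * (η / (800 * (M+1)^2) + η / (800 * (M+1)^2)) := by
        apply mul_le_mul_of_nonneg_left (by linarith [hrsm.le]) (by positivity)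
      have h6 : 200 * (M+1)^2 * (η / (800 * (M+1)^2) + η / (800 * (M+1)^2)) = η / 2 := by
        field_simp; ring
      linarith
    constructor
    · have hwv : |w₀ r x - (1:ℝ) * r⁻¹| ≤ δ * r⁻¹ := by
        rw [one_mul]
        refine (hw₀r x).trans ?_
        nlinarith
      have key := core_est M δ r (Real.cosh r) (T x) 1 (H₀ r x) (H r x) (w₀ r x) (ρ r x)
        hM hδ0 hδ1 hr0 hrle1' hrM hc1 hc2 (hTM x) (by norm_num) (hH₀r x) (hHr x)
        (hρr x) hwv
      have e : T x / 2 * 1 = 1/2 * T x := by ring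
      rw [e] at key
      linarith
    · intro i
      have hxn : ‖(x : EuclideanSpace ℝ (Fin 3))‖ = 1 := mem_sphere_zero_iff_norm.mp x.2
      have hu : |(x : EuclideanSpace ℝ (Fin 3)) i| ≤ 1 :=
        (coord_le_norm _ i).trans_eq hxn
      have hwv : |w r x i - (x : EuclideanSpace ℝ (Fin 3)) i * r⁻¹| ≤ δ * r⁻¹ := by
        have := hwr x i
        rw [mul_comm]
        exact this
      have key := core_est M δ r (Real.cosh r) (T x) ((x : EuclideanSpace ℝ (Fin 3)) i)
        (H₀ r x) (H r x) (w r x i) (ρ r x)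
        hM hδ0 hδ1 hr0 hrle1' hrM hc1 hc2 (hTM x) hu (hH₀r x) (hHr x) (hρr x) hwv
      have e : T x / 2 * (x : EuclideanSpace ℝ (Fin 3)) i =
          1/2 * T x * (x : EuclideanSpace ℝ (Fin 3)) i := by ring
      rw [e] at key
      linarith
  -- scalar part
  have hscalar : Tendsto
      (fun r => ∫ x, (H₀ r x ^ 2 - H r x ^ 2) / H r x * w₀ r x * ρ r x ∂sphereMeasure)
      (𝓝[>] (0:ℝ)) (𝓝 (∫ x, 1/2 * T x ∂sphereMeasure)) := by
    refine integral_tendsto_of_uniform sphereMeasure _ _ (hint.mono fun r h => h.1) ?_ ?_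
    · exact (continuous_const.mul hT).integrable_of_hasCompactSupport
        (HasCompactSupport.of_compactSpace _)
    · intro η hη
      filter_upwards [hunif η hη] with r hr x
      rw [Real.norm_eq_abs]
      have := (hr x).1
      linarith
  -- vector part
  have hvec : Tendsto
      (fun r => ∫ x, ((H₀ r x ^ 2 - H r x ^ 2) / H r x * ρ r x) • w r x ∂sphereMeasure)
      (𝓝[>] (0:ℝ))
      (𝓝 (∫ x, (1/2 * T x) • (x : EuclideanSpace ℝ (Fin 3)) ∂sphereMeasure)) := by
    refine integral_tendsto_of_uniform sphereMeasure _ _ (hint.mono fun r h => h.2) ?_ ?_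
    · exact ((continuous_const.mul hT).smul continuous_subtype_val).integrable_of_hasCompactSupport
        (HasCompactSupport.of_compactSpace _)
    · intro η hη
      filter_upwards [hunif η hη] with r hr x
      have hcomp : ∀ i : Fin 3,
          |(((H₀ r x ^ 2 - H r x ^ 2) / H r x * ρ r x) • w r x -
            (1/2 * T x) • (x : EuclideanSpace ℝ (Fin 3))) i| ≤ η/2 := by
        intro i
        have hvi : (((H₀ r x ^ 2 - H r x ^ 2) / H r x * ρ r x) • w r x -
            (1/2 * T x) • (x : EuclideanSpace ℝ (Fin 3))) i =
            ((H₀ r x ^ 2 - H r x ^ 2) / H r x * ρ r x) * w r x i -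
            (1/2 * T x) * (x : EuclideanSpace ℝ (Fin 3)) i := rfl
        rw [hvi]
        have e : ((H₀ r x ^ 2 - H r x ^ 2) / H r x * ρ r x) * w r x i -
            (1/2 * T x) * (x : EuclideanSpace ℝ (Fin 3)) i =
            (H₀ r x ^ 2 - H r x ^ 2) / H r x * (w r x i) * ρ r x -
            1/2 * T x * (x : EuclideanSpace ℝ (Fin 3)) i := by ring
        rw [e]
        exact (hr x).2 i
      have := norm_le_of_coords _ (η/2) (by positivity) hcomp
      linarith
  -- assemble
  have e1 : ∫ x, 1/2 * T x ∂sphereMeasure = 1/2 * ∫ x, T x ∂sphereMeasure :=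
    integral_const_mul _ _
  have e2 : ∫ x, (1/2 * T x) • (x : EuclideanSpace ℝ (Fin 3)) ∂sphereMeasure =
      (1/2 : ℝ) • ∫ x, T x • (x : EuclideanSpace ℝ (Fin 3)) ∂sphereMeasure := by
    simp_rw [mul_smul]
    exact integral_smul _ _
  have hfinal := hscalar.prodMk_nhds hvec
  rw [e1, e2] at hfinal
  exact hfinal
end
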